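/- Let f, g : ℝ → ℝ be C¹ strictly convex superlinear functions with minima θ_f, θ_g, f(θ_f) ≤ g(θ_g), and let θ̄_g ≥ θ_f satisfy f(θ̄_g) = g(θ_g). Let g₊ denote the restriction of g to [θ_g, ∞) and g₊⁻¹ its inverse on [g(θ_g), ∞). Then the function h₊ : [f'(θ̄_g), ∞) → [0, ∞) defined by h₊(p) = g'(g₊⁻¹(f((f')⁻¹(p)))) is well defined, continuous, and strictly increasing, with h₊(f'(θ̄_g)) = 0 and h₊(p) → ∞ as p → ∞. -/

import Mathlib

open Filter

/-- the function `h₊(p) = g'(g₊⁻¹(f((f')⁻¹(p))))` is well defined on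
`[f'(θ̄g), ∞)`, continuous, strictly increasing, nonnegative, vanishes at
`f'(θ̄g)` and tends to `∞` at `∞`. -/
theorem stmt4 (f g : ℝ → ℝ) (hfC1 : ContDiff ℝ 1 f) (hgC1 : ContDiff ℝ 1 g)
    (hfconv : StrictConvexOn ℝ Set.univ f) (hgconv : StrictConvexOn ℝ Set.univ g)
    (hfsuper : Tendsto (fun p => f p / |p|) (cocompact ℝ) atTop)
    (hgsuper : Tendsto (fun p => g p / |p|) (cocompact ℝ) atTop)
    (θf θg θbar : ℝ) (hθf : ∀ x, f θf ≤ f x) (hθg : ∀ x, g θg ≤ g x)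
    (hle : f θf ≤ g θg) (hθbar : θf ≤ θbar) (hfθbar : f θbar = g θg)
    (finv gplusinv : ℝ → ℝ)
    (hfinv : ∀ p, deriv f (finv p) = p)
    (hgpi : ∀ y, g θg ≤ y → θg ≤ gplusinv y ∧ g (gplusinv y) = y) :
    (∀ p, deriv f θbar ≤ p → g θg ≤ f (finv p)) ∧
    ContinuousOn (fun p => deriv g (gplusinv (f (finv p)))) (Set.Ici (deriv f θbar)) ∧
    StrictMonoOn (fun p => deriv g (gplusinv (f (finv p)))) (Set.Ici (deriv f θbar)) ∧
    (∀ p, deriv f θbar ≤ p → 0 ≤ deriv g (gplusinv (f (finv p)))) ∧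
    deriv g (gplusinv (f (finv (deriv f θbar)))) = 0 ∧
    Tendsto (fun p => deriv g (gplusinv (f (finv p)))) atTop atTop := by
  have hfd : Differentiable ℝ f := hfC1.differentiable one_ne_zero
  have hgd : Differentiable ℝ g := hgC1.differentiable one_ne_zero
  have hf' : StrictMono (deriv f) :=
    strictMonoOn_univ.1 (hfconv.strictMonoOn_deriv fun x _ => (hfd x))
  have hg' : StrictMono (deriv g) :=
    strictMonoOn_univ.1 (hgconv.strictMonoOn_deriv fun x _ => (hgd x))
  have hf'θf : deriv f θf = 0 := by
    have hloc : IsLocalMin f θf := Filter.Eventually.of_forall hθf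
    exact hloc.deriv_eq_zero
  have hg'θg : deriv g θg = 0 := by
    have hloc : IsLocalMin g θg := Filter.Eventually.of_forall hθg
    exact hloc.deriv_eq_zero
  -- finv is a two-sided inverse of deriv f
  have hfinv_inv : ∀ x, finv (deriv f x) = x := fun x => hf'.injective (hfinv _)
  have hfinv_mono : StrictMono finv := fun p q h => by
    have := hf'.lt_iff_lt (a := finv p) (b := finv q)
    rw [hfinv, hfinv] at this
    exact this.1 h
  have hfinv_surj : Function.Surjective finv := fun x => ⟨deriv f x, hfinv_inv x⟩
  have hfinv_cont : Continuous finv :=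
    hfinv_mono.monotone.continuous_of_surjective hfinv_surj
  -- f strictly increasing on [θf, ∞)
  have hfmono : StrictMonoOn f (Set.Ici θf) := by
    apply strictMonoOn_of_deriv_pos (convex_Ici θf) hfd.continuous.continuousOn
    intro x hx
    rw [interior_Ici] at hx
    have : deriv f θf < deriv f x := hf' hx
    rwa [hf'θf] at this
  have hgmono : StrictMonoOn g (Set.Ici θg) := by
    apply strictMonoOn_of_deriv_pos (convex_Ici θg) hgd.continuous.continuousOn
    intro x hx
    rw [interior_Ici] at hx
    have : deriv g θg < deriv g x := hg' hx
    rwa [hg'θg] at this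
  -- gplusinv is a left inverse of g on [θg, ∞)
  have hgi_left : ∀ x, θg ≤ x → gplusinv (g x) = x := by
    intro x hx
    exact hgmono.injOn (Set.mem_Ici.2 (hgpi _ (hθg x)).1) (Set.mem_Ici.2 hx)
      (hgpi _ (hθg x)).2
  have hgθg : gplusinv (g θg) = θg := hgi_left θg le_rfl
  have hgi_mono : StrictMonoOn gplusinv (Set.Ici (g θg)) := by
    intro y1 h1 y2 h2 h12
    have e1 := hgpi y1 h1
    have e2 := hgpi y2 h2
    have := hgmono.lt_iff_lt (Set.mem_Ici.2 e1.1) (Set.mem_Ici.2 e2.1)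
    rw [e1.2, e2.2] at this
    exact this.1 h12
  -- for p ≥ deriv f θbar, θbar ≤ finv p
  have hbar_le : ∀ p, deriv f θbar ≤ p → θbar ≤ finv p := by
    intro p hp
    have := hf'.le_iff_le (a := θbar) (b := finv p)
    rw [hfinv] at this
    exact this.1 hp
  -- claim 1 : well-definedness
  have claim1 : ∀ p, deriv f θbar ≤ p → g θg ≤ f (finv p) := by
    intro p hp
    have h1 : θbar ≤ finv p := hbar_le p hp
    have := hfmono.monotoneOn (Set.mem_Ici.2 hθbar)
      (Set.mem_Ici.2 (hθbar.trans h1)) h1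
    rwa [hfθbar] at this
  -- continuity of gplusinv on [g θg, ∞) via a monotone surjective global extension
  have hgi_cont : ContinuousOn gplusinv (Set.Ici (g θg)) := by
    set G : ℝ → ℝ := fun y => gplusinv (max y (g θg)) + min (y - g θg) 0 with hG
    have hmono : Monotone G := by
      have m1 : Monotone fun y => gplusinv (max y (g θg)) := by
        intro y1 y2 h
        exact hgi_mono.monotoneOn (Set.mem_Ici.2 (le_max_right _ _))
          (Set.mem_Ici.2 (le_max_right _ _)) (max_le_max h le_rfl)
      have m2 : Monotone fun y => min (y - g θg) 0 := fun y1 y2 h =>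
        min_le_min (by linarith) le_rfl
      exact m1.add m2
    have hsurj : Function.Surjective G := by
      intro z
      rcases le_or_gt θg z with hz | hz
      · refine ⟨g z, ?_⟩
        have h1 : max (g z) (g θg) = g z := max_eq_left (hθg z)
        have h2 : min (g z - g θg) 0 = 0 := min_eq_right (by linarith [hθg z])
        simp [hG, h1, h2, hgi_left z hz]
      · refine ⟨g θg + (z - θg), ?_⟩
        have h1 : max (g θg + (z - θg)) (g θg) = g θg := max_eq_right (by linarith)
        have h2 : min (g θg + (z - θg) - g θg) 0 = z - θg := by
          rw [show g θg + (z - θg) - g θg = z - θg by ring]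
          exact min_eq_left (by linarith)
        simp only [hG, h1, h2, hgθg]
        ring
    have hcont : Continuous G := hmono.continuous_of_surjective hsurj
    refine hcont.continuousOn.congr ?_
    intro y hy
    have h1 : max y (g θg) = y := max_eq_left hy
    have h2 : min (y - g θg) 0 = 0 := min_eq_right (by simp at hy; linarith)
    simp [hG, h1, h2]
  -- continuity of h
  have hderivg_cont : Continuous (deriv g) := hgC1.continuous_deriv le_rfl
  have hy_cont : Continuous fun p => f (finv p) := hfd.continuous.comp hfinv_cont
  have hmaps : Set.MapsTo (fun p => f (finv p)) (Set.Ici (deriv f θbar))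
      (Set.Ici (g θg)) := fun p hp => Set.mem_Ici.2 (claim1 p hp)
  have hcont : ContinuousOn (fun p => deriv g (gplusinv (f (finv p))))
      (Set.Ici (deriv f θbar)) := by
    exact hderivg_cont.comp_continuousOn
      ((hgi_cont.comp hy_cont.continuousOn hmaps))
  -- strict monotonicity
  have hsm : StrictMonoOn (fun p => deriv g (gplusinv (f (finv p))))
      (Set.Ici (deriv f θbar)) := by
    intro p hp q hq hpq
    have h1 : finv p < finv q := hfinv_mono hpq
    have hp1 : θf ≤ finv p := hθbar.trans (hbar_le p hp)
    have hq1 : θf ≤ finv q := hθbar.trans (hbar_le q hq)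
    have h2 : f (finv p) < f (finv q) :=
      hfmono (Set.mem_Ici.2 hp1) (Set.mem_Ici.2 hq1) h1
    have h3 : gplusinv (f (finv p)) < gplusinv (f (finv q)) :=
      hgi_mono (Set.mem_Ici.2 (claim1 p hp)) (Set.mem_Ici.2 (claim1 q hq)) h2
    exact hg' h3
  -- nonnegativity
  have hnn : ∀ p, deriv f θbar ≤ p → 0 ≤ deriv g (gplusinv (f (finv p))) := by
    intro p hp
    have h1 : θg ≤ gplusinv (f (finv p)) := (hgpi _ (claim1 p hp)).1
    have := hg'.monotone h1
    rwa [hg'θg] at this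
  -- value at the left endpoint
  have hval : deriv g (gplusinv (f (finv (deriv f θbar)))) = 0 := by
    rw [hfinv_inv θbar, hfθbar, hgθg, hg'θg]
  -- tendsto atTop
  have hAtTop : Tendsto (fun p => deriv g (gplusinv (f (finv p)))) atTop atTop := by
    have hA : Tendsto finv atTop atTop :=
      hfinv_mono.monotone.tendsto_atTop_atTop fun b => ⟨deriv f b, (hfinv_inv b).ge⟩
    have hfsuper' : Tendsto (fun x => f x / |x|) atTop atTop :=
      hfsuper.mono_left atTop_le_cocompact
    have habs : Tendsto (fun x : ℝ => |x|) atTop atTop := tendsto_abs_atTop_atTop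
    have hftop : Tendsto f atTop atTop := by
      have hmul : Tendsto (fun x => f x / |x| * |x|) atTop atTop :=
        hfsuper'.atTop_mul_atTop₀ habs
      refine hmul.congr' ?_
      filter_upwards [eventually_ge_atTop (1 : ℝ)] with x hx
      have : |x| ≠ 0 := by positivity
      field_simp
    have hwtop : Tendsto (fun p => f (finv p)) atTop atTop := hftop.comp hA
    -- gplusinv (f (finv p)) → ∞
    have hztop : Tendsto (fun p => gplusinv (f (finv p))) atTop atTop := by
      rw [tendsto_atTop]
      intro b
      have hb' : g θg ≤ g (max b θg) := hθg _
      filter_upwards [hwtop.eventually_ge_atTop (g (max b θg))] with p hp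
      have h1 : g θg ≤ f (finv p) := hb'.trans hp
      have h2 : gplusinv (g (max b θg)) ≤ gplusinv (f (finv p)) :=
        hgi_mono.monotoneOn (Set.mem_Ici.2 hb') (Set.mem_Ici.2 h1) hp
      rw [hgi_left _ (le_max_right b θg)] at h2
      exact (le_max_left b θg).trans h2
    -- deriv g → ∞
    have hderivg_top : Tendsto (deriv g) atTop atTop := by
      apply hg'.monotone.tendsto_atTop_atTop
      intro b
      have hgsuper' : Tendsto (fun x => g x / |x|) atTop atTop :=
        hgsuper.mono_left atTop_le_cocompact
      obtain ⟨x, hx1, hx2⟩ :=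
        ((hgsuper'.eventually_ge_atTop (max b 0 + |g 0|)).and
          (eventually_ge_atTop (1 : ℝ))).exists
      have hx0 : (0 : ℝ) < x := lt_of_lt_of_le one_pos hx2
      have habsx : |x| = x := abs_of_pos hx0
      rw [habsx] at hx1
      have hgx : (max b 0 + |g 0|) * x ≤ g x := (le_div_iff₀ hx0).1 hx1
      have hslope : b ≤ (g x - g 0) / (x - 0) := by
        rw [sub_zero, le_div_iff₀ hx0]
        have h1 : b * x ≤ max b 0 * x := by
          have := le_max_left b 0
          nlinarith
        have h2 : g 0 ≤ |g 0| := le_abs_self _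
        have h3 : |g 0| ≤ |g 0| * x := by nlinarith [abs_nonneg (g 0)]
        nlinarith
      obtain ⟨c, _, hc⟩ := exists_hasDerivAt_eq_slope g (deriv g) hx0
        hgd.continuous.continuousOn (fun y _ => (hgd y).hasDerivAt)
      exact ⟨c, hc ▸ hslope⟩
    exact hderivg_top.comp hztop
  exact ⟨claim1, hcont, hsm, hnn, hval, hAtTop⟩
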